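/- Let G : ℝ^m → ℝ_+ be continuous, supermodular and non-decreasing in each variable on ℝ_+^m, and let V : ℝ_+ → ℝ_+ be non-increasing. Let U = (u_1,…,u_m) with each u_i : ℝ^N → ℝ_+ measurable such that the double integral Q(U) = ∫∫ G(U(x)) V(|x−y|) G(U(y)) dx dy is finite. Then for every closed half-space H ⊂ ℝ^N, Q(U^H) ≥ Q(U), where U^H is the componentwise polarization of U with respect to H. -/

import Mathlib

open MeasureTheory ENNReal NNReal Filter Topology

/-- Reflection of `x` across the hyperplane `{x | ⟪x, e⟫ = t}`. -/
noncomputable def reflH {N : ℕ} (e : EuclideanSpace ℝ (Fin N)) (t : ℝ)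
    (x : EuclideanSpace ℝ (Fin N)) : EuclideanSpace ℝ (Fin N) :=
  x - (2 * ((inner ℝ x e : ℝ) - t)) • e

/-- Polarization of `u` with respect to the closed half-space `{x | t ≤ ⟪x, e⟫}`. -/
noncomputable def polarize {N : ℕ} (e : EuclideanSpace ℝ (Fin N)) (t : ℝ)
    (u : EuclideanSpace ℝ (Fin N) → ℝ) (x : EuclideanSpace ℝ (Fin N)) : ℝ :=
  if t ≤ (inner ℝ x e : ℝ) then max (u x) (u (reflH e t x)) else min (u x) (u (reflH e t x))

section Aux

/- Algebraic core: the two-point rearrangement inequality. -/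
private lemma keyB (p p' q q' A A' B B' : ℝ) (hp : 0 ≤ p) (hp' : 0 ≤ p')
    (hpA : p ≤ A) (hp'A : p' ≤ A) (hsA : p + p' ≤ A + A')
    (hqB : q ≤ B) (hq'B : q' ≤ B) (hB' : 0 ≤ B') (hB'B : B' ≤ B) (hsB : q + q' ≤ B + B') :
    p * q + p' * q' ≤ A * B + A' * B' := by
  rcases le_total p p' with h | h <;> rcases le_total q q' with h2 | h2
  · nlinarith [mul_nonneg hB' (by linarith : (0:ℝ) ≤ A' - (p + p' - A)),
      mul_nonneg (by linarith : (0:ℝ) ≤ A - p') (by linarith : (0:ℝ) ≤ B - B'),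
      mul_nonneg hp (by linarith : (0:ℝ) ≤ B' - (q + q' - B)),
      mul_nonneg (by linarith : (0:ℝ) ≤ p' - p) (by linarith : (0:ℝ) ≤ B - q'),
      mul_nonneg (by linarith : (0:ℝ) ≤ p' - p) (by linarith : (0:ℝ) ≤ q' - q)]
  · nlinarith [mul_nonneg hB' (by linarith : (0:ℝ) ≤ A' - (p + p' - A)),
      mul_nonneg (by linarith : (0:ℝ) ≤ A - p') (by linarith : (0:ℝ) ≤ B - B'),
      mul_nonneg hp (by linarith : (0:ℝ) ≤ B' - (q + q' - B)),
      mul_nonneg (by linarith : (0:ℝ) ≤ p' - p) (by linarith : (0:ℝ) ≤ B - q),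
      mul_nonneg (by linarith : (0:ℝ) ≤ p' - p) (by linarith : (0:ℝ) ≤ q - q')]
  · nlinarith [mul_nonneg hB' (by linarith : (0:ℝ) ≤ A' - (p + p' - A)),
      mul_nonneg (by linarith : (0:ℝ) ≤ A - p) (by linarith : (0:ℝ) ≤ B - B'),
      mul_nonneg hp' (by linarith : (0:ℝ) ≤ B' - (q + q' - B)),
      mul_nonneg (by linarith : (0:ℝ) ≤ p - p') (by linarith : (0:ℝ) ≤ B - q'),
      mul_nonneg (by linarith : (0:ℝ) ≤ p - p') (by linarith : (0:ℝ) ≤ q' - q)]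
  · nlinarith [mul_nonneg hB' (by linarith : (0:ℝ) ≤ A' - (p + p' - A)),
      mul_nonneg (by linarith : (0:ℝ) ≤ A - p) (by linarith : (0:ℝ) ≤ B - B'),
      mul_nonneg hp' (by linarith : (0:ℝ) ≤ B' - (q + q' - B)),
      mul_nonneg (by linarith : (0:ℝ) ≤ p - p') (by linarith : (0:ℝ) ≤ B - q),
      mul_nonneg (by linarith : (0:ℝ) ≤ p - p') (by linarith : (0:ℝ) ≤ q - q')]

private lemma keyAlg (p p' q q' A A' B B' w1 w2 : ℝ)
    (hp : 0 ≤ p) (hp' : 0 ≤ p') (hq : 0 ≤ q) (hq' : 0 ≤ q')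
    (hpA : p ≤ A) (hp'A : p' ≤ A) (hA' : 0 ≤ A') (hsA : p + p' ≤ A + A')
    (hqB : q ≤ B) (hq'B : q' ≤ B) (hB' : 0 ≤ B') (hB'B : B' ≤ B) (hsB : q + q' ≤ B + B')
    (hw2 : 0 ≤ w2) (hw : w2 ≤ w1) :
    p * w1 * q + p' * w1 * q' + p' * w2 * q + p * w2 * q' ≤
      A * w1 * B + A' * w1 * B' + A' * w2 * B + A * w2 * B' := by
  have hstepB := keyB p p' q q' A A' B B' hp hp' hpA hp'A hsA hqB hq'B hB' hB'B hsB
  have hstepA : (p + p') * (q + q') ≤ (A + A') * (B + B') :=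
    mul_le_mul (by linarith) (by linarith) (by linarith) (by linarith)
  nlinarith [mul_nonneg hw2 (sub_nonneg.2 hstepA),
    mul_nonneg (sub_nonneg.2 hw) (sub_nonneg.2 hstepB)]

variable {N : ℕ} {e : EuclideanSpace ℝ (Fin N)} {t : ℝ}

private lemma inner_ee (he : ‖e‖ = 1) : (inner ℝ e e : ℝ) = 1 := by
  rw [real_inner_self_eq_norm_sq, he]; norm_num

private lemma inner_reflH (he : ‖e‖ = 1) (x : EuclideanSpace ℝ (Fin N)) :
    (inner ℝ (reflH e t x) e : ℝ) = 2 * t - inner ℝ x e := by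
  rw [reflH, inner_sub_left, real_inner_smul_left, inner_ee he]; ring

private lemma reflH_invol (he : ‖e‖ = 1) (x : EuclideanSpace ℝ (Fin N)) :
    reflH e t (reflH e t x) = x := by
  have h := inner_reflH (t := t) he x
  rw [reflH, h, reflH]
  module

private lemma norm_reflH_sub (he : ‖e‖ = 1) (x y : EuclideanSpace ℝ (Fin N)) :
    ‖reflH e t x - reflH e t y‖ = ‖x - y‖ := by
  have h : ‖reflH e t x - reflH e t y‖ ^ 2 = ‖x - y‖ ^ 2 := by
    rw [← real_inner_self_eq_norm_sq, ← real_inner_self_eq_norm_sq, reflH, reflH]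
    simp only [inner_sub_left, inner_sub_right, real_inner_smul_left, real_inner_smul_right,
      inner_ee he]
    rw [real_inner_comm e x, real_inner_comm e y, real_inner_comm y x]; ring
  rw [← Real.sqrt_sq (norm_nonneg (reflH e t x - reflH e t y)),
    ← Real.sqrt_sq (norm_nonneg (x - y)), h]

private lemma norm_reflH_cross (he : ‖e‖ = 1) (x y : EuclideanSpace ℝ (Fin N)) :
    ‖reflH e t x - y‖ = ‖x - reflH e t y‖ := by
  calc ‖reflH e t x - y‖ = ‖reflH e t x - reflH e t (reflH e t y)‖ := by
        rw [reflH_invol he y]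
    _ = ‖x - reflH e t y‖ := norm_reflH_sub he _ _

private lemma norm_cross_ge (he : ‖e‖ = 1) (x y : EuclideanSpace ℝ (Fin N))
    (hx : t ≤ inner ℝ x e) (hy : t ≤ inner ℝ y e) : ‖x - y‖ ≤ ‖x - reflH e t y‖ := by
  have h : ‖x - y‖ ^ 2 ≤ ‖x - reflH e t y‖ ^ 2 := by
    rw [← real_inner_self_eq_norm_sq, ← real_inner_self_eq_norm_sq, reflH]
    simp only [inner_sub_left, inner_sub_right, real_inner_smul_left, real_inner_smul_right,
      inner_ee he]
    have hx' : t ≤ (inner ℝ e x : ℝ) := by rw [real_inner_comm]; exact hx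
    have hy' : t ≤ (inner ℝ e y : ℝ) := by rw [real_inner_comm]; exact hy
    nlinarith [mul_nonneg (sub_nonneg.2 hx') (sub_nonneg.2 hy'),
      real_inner_comm y x, real_inner_comm e x, real_inner_comm e y]
  rw [← Real.sqrt_sq (norm_nonneg (x - y)), ← Real.sqrt_sq (norm_nonneg (x - reflH e t y))]
  exact Real.sqrt_le_sqrt h

private lemma reflH_measurePreserving (he : ‖e‖ = 1) :
    MeasurePreserving (reflH e t) (volume : Measure (EuclideanSpace ℝ (Fin N))) volume := by
  set L : EuclideanSpace ℝ (Fin N) ≃ₗᵢ[ℝ] EuclideanSpace ℝ (Fin N) :=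
    (Submodule.reflection (ℝ ∙ e)).trans (LinearIsometryEquiv.neg ℝ) with hL
  have hLapp : ∀ x, L x = x - (2 * (inner ℝ x e : ℝ)) • e := by
    intro x
    have : Submodule.reflection (ℝ ∙ e) x = (2 * (inner ℝ e x : ℝ)) • e - x := by
      rw [Submodule.reflection_singleton_apply]
      rw [he]
      push_cast
      rw [two_smul]
      module
    simp only [hL, LinearIsometryEquiv.trans_apply, LinearIsometryEquiv.coe_neg, this]
    rw [real_inner_comm e x]
    module
  have hfun : reflH e t = (fun y => y + (2 * t) • e) ∘ L := by
    funext x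
    simp only [Function.comp_apply, hLapp, reflH]
    module
  rw [hfun]
  exact (measurePreserving_add_right volume ((2 * t) • e)).comp L.measurePreserving

private lemma reflH_fixed (hx : (inner ℝ x e : ℝ) = t) : reflH e t x = x := by
  rw [reflH, hx]
  simp

private lemma polarize_max (u : EuclideanSpace ℝ (Fin N) → ℝ) {x : EuclideanSpace ℝ (Fin N)}
    (hx : t ≤ (inner ℝ x e : ℝ)) :
    polarize e t u x = max (u x) (u (reflH e t x)) := if_pos hx

private lemma polarize_min (he : ‖e‖ = 1) (u : EuclideanSpace ℝ (Fin N) → ℝ)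
    {x : EuclideanSpace ℝ (Fin N)} (hx : t ≤ (inner ℝ x e : ℝ)) :
    polarize e t u (reflH e t x) = min (u x) (u (reflH e t x)) := by
  rcases eq_or_lt_of_le hx with h | h
  · have hfix : reflH e t x = x := reflH_fixed h.symm
    rw [hfix, polarize, if_pos hx, hfix]
    simp
  · have hneg : ¬ t ≤ (inner ℝ (reflH e t x) e : ℝ) := by
      rw [inner_reflH he]; linarith
    rw [polarize, if_neg hneg, reflH_invol he, min_comm]

end Aux

/-- Polarization increases the bilinear convolution functional `Q`. -/
theorem stmt5 (N m : ℕ) (G : (Fin m → ℝ) → ℝ) (hGc : Continuous G)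
    (hG0 : ∀ y : Fin m → ℝ, 0 ≤ y → 0 ≤ G y)
    (hmono : ∀ y z : Fin m → ℝ, 0 ≤ y → y ≤ z → G y ≤ G z)
    (hsuper : ∀ a b : Fin m → ℝ, 0 ≤ a → 0 ≤ b → G a + G b ≤ G (a ⊔ b) + G (a ⊓ b))
    (V : ℝ → ℝ) (hV0 : ∀ r, 0 ≤ V r)
    (hVanti : ∀ a b : ℝ, 0 ≤ b → b ≤ a → V a ≤ V b)
    (U : Fin m → EuclideanSpace ℝ (Fin N) → ℝ)
    (hUm : ∀ i, Measurable (U i)) (hU0 : ∀ i x, 0 ≤ U i x)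
    (e : EuclideanSpace ℝ (Fin N)) (he : ‖e‖ = 1) (t : ℝ)
    (hQint : Integrable (fun z : EuclideanSpace ℝ (Fin N) × EuclideanSpace ℝ (Fin N) =>
      G (fun i => U i z.1) * V ‖z.1 - z.2‖ * G (fun i => U i z.2)) volume)
    (hQHint : Integrable (fun z : EuclideanSpace ℝ (Fin N) × EuclideanSpace ℝ (Fin N) =>
      G (fun i => polarize e t (U i) z.1) * V ‖z.1 - z.2‖ *
        G (fun i => polarize e t (U i) z.2)) volume) :
    (∫ x, ∫ y, G (fun i => U i x) * V ‖x - y‖ * G (fun i => U i y)) ≤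
      ∫ x, ∫ y, G (fun i => polarize e t (U i) x) * V ‖x - y‖ *
        G (fun i => polarize e t (U i) y) := by
  classical
  set F : EuclideanSpace ℝ (Fin N) × EuclideanSpace ℝ (Fin N) → ℝ :=
    fun z => G (fun i => U i z.1) * V ‖z.1 - z.2‖ * G (fun i => U i z.2) with hF
  set FH : EuclideanSpace ℝ (Fin N) × EuclideanSpace ℝ (Fin N) → ℝ :=
    fun z => G (fun i => polarize e t (U i) z.1) * V ‖z.1 - z.2‖ *
      G (fun i => polarize e t (U i) z.2) with hFH
  -- the pointwise four-point inequality in the half-space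
  have hcore : ∀ x y : EuclideanSpace ℝ (Fin N), t ≤ (inner ℝ x e : ℝ) → t ≤ (inner ℝ y e : ℝ) →
      F (x, y) + F (reflH e t x, reflH e t y) + F (reflH e t x, y) + F (x, reflH e t y) ≤
        FH (x, y) + FH (reflH e t x, reflH e t y) + FH (reflH e t x, y) +
          FH (x, reflH e t y) := by
    intro x y hx hy
    have ha0 : (0 : Fin m → ℝ) ≤ fun i => U i x := fun i => by simpa using hU0 i x
    have ha'0 : (0 : Fin m → ℝ) ≤ fun i => U i (reflH e t x) := fun i => by
      simpa using hU0 i (reflH e t x)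
    have hb0 : (0 : Fin m → ℝ) ≤ fun i => U i y := fun i => by simpa using hU0 i y
    have hb'0 : (0 : Fin m → ℝ) ≤ fun i => U i (reflH e t y) := fun i => by
      simpa using hU0 i (reflH e t y)
    have hpolx : (fun i => polarize e t (U i) x)
        = (fun i => U i x) ⊔ (fun i => U i (reflH e t x)) := by
      funext i
      rw [Pi.sup_apply, polarize_max (U i) hx]
    have hpolσx : (fun i => polarize e t (U i) (reflH e t x))
        = (fun i => U i x) ⊓ (fun i => U i (reflH e t x)) := by
      funext i
      rw [Pi.inf_apply, polarize_min he (U i) hx]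
    have hpoly : (fun i => polarize e t (U i) y)
        = (fun i => U i y) ⊔ (fun i => U i (reflH e t y)) := by
      funext i
      rw [Pi.sup_apply, polarize_max (U i) hy]
    have hpolσy : (fun i => polarize e t (U i) (reflH e t y))
        = (fun i => U i y) ⊓ (fun i => U i (reflH e t y)) := by
      funext i
      rw [Pi.inf_apply, polarize_min he (U i) hy]
    have hn1 : ‖reflH e t x - reflH e t y‖ = ‖x - y‖ := norm_reflH_sub he x y
    have hn2 : ‖reflH e t x - y‖ = ‖x - reflH e t y‖ := norm_reflH_cross he x y
    simp only [hF, hFH, hpolx, hpolσx, hpoly, hpolσy, hn1, hn2]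
    exact keyAlg (G fun i => U i x) (G fun i => U i (reflH e t x)) (G fun i => U i y)
      (G fun i => U i (reflH e t y)) _ _ _ _ (V ‖x - y‖) (V ‖x - reflH e t y‖)
      (hG0 _ ha0) (hG0 _ ha'0) (hG0 _ hb0) (hG0 _ hb'0)
      (hmono _ _ ha0 le_sup_left) (hmono _ _ ha'0 le_sup_right)
      (hG0 _ (le_inf ha0 ha'0)) (hsuper _ _ ha0 ha'0)
      (hmono _ _ hb0 le_sup_left) (hmono _ _ hb'0 le_sup_right)
      (hG0 _ (le_inf hb0 hb'0))
      (hmono _ _ (le_inf hb0 hb'0) (le_trans inf_le_left le_sup_left))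
      (hsuper _ _ hb0 hb'0)
      (hV0 _) (hVanti _ _ (norm_nonneg _) (norm_cross_ge he x y hx hy))
  -- the pointwise four-point inequality everywhere
  have hpoint : ∀ z : EuclideanSpace ℝ (Fin N) × EuclideanSpace ℝ (Fin N),
      F z + F (reflH e t z.1, reflH e t z.2) + F (reflH e t z.1, z.2) +
          F (z.1, reflH e t z.2) ≤
        FH z + FH (reflH e t z.1, reflH e t z.2) + FH (reflH e t z.1, z.2) +
          FH (z.1, reflH e t z.2) := by
    rintro ⟨x, y⟩
    dsimp only
    rcases le_total t (inner ℝ x e : ℝ) with hx | hx <;>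
      rcases le_total t (inner ℝ y e : ℝ) with hy | hy
    · exact hcore x y hx hy
    · have hy' : t ≤ (inner ℝ (reflH e t y) e : ℝ) := by
        rw [inner_reflH he]; linarith
      have h := hcore x (reflH e t y) hx hy'
      rw [reflH_invol he y] at h
      linarith
    · have hx' : t ≤ (inner ℝ (reflH e t x) e : ℝ) := by
        rw [inner_reflH he]; linarith
      have h := hcore (reflH e t x) y hx' hy
      rw [reflH_invol he x] at h
      linarith
    · have hx' : t ≤ (inner ℝ (reflH e t x) e : ℝ) := by
        rw [inner_reflH he]; linarith
      have hy' : t ≤ (inner ℝ (reflH e t y) e : ℝ) := by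
        rw [inner_reflH he]; linarith
      have h := hcore (reflH e t x) (reflH e t y) hx' hy'
      rw [reflH_invol he x, reflH_invol he y] at h
      linarith
  -- measurable equivalences and measure preservation
  have hσmp : MeasurePreserving (reflH e t)
      (volume : Measure (EuclideanSpace ℝ (Fin N))) volume := reflH_measurePreserving he
  let σe : EuclideanSpace ℝ (Fin N) ≃ᵐ EuclideanSpace ℝ (Fin N) :=
    { toFun := reflH e t
      invFun := reflH e t
      left_inv := reflH_invol he
      right_inv := reflH_invol he
      measurable_toFun := hσmp.measurable
      measurable_invFun := hσmp.measurable }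
  have hmp1 : MeasurePreserving (Prod.map (reflH e t) (reflH e t))
      (volume : Measure (EuclideanSpace ℝ (Fin N) × EuclideanSpace ℝ (Fin N))) volume := by
    rw [Measure.volume_eq_prod]; exact hσmp.prod hσmp
  have hmp2 : MeasurePreserving (Prod.map (reflH e t) id)
      (volume : Measure (EuclideanSpace ℝ (Fin N) × EuclideanSpace ℝ (Fin N))) volume := by
    rw [Measure.volume_eq_prod]; exact hσmp.prod (MeasurePreserving.id volume)
  have hmp3 : MeasurePreserving (Prod.map id (reflH e t))
      (volume : Measure (EuclideanSpace ℝ (Fin N) × EuclideanSpace ℝ (Fin N))) volume := by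
    rw [Measure.volume_eq_prod]; exact (MeasurePreserving.id volume).prod hσmp
  have hemb1 : MeasurableEmbedding (Prod.map (reflH e t) (reflH e t)) := by
    have hco : ⇑(σe.prodCongr σe) = Prod.map (reflH e t) (reflH e t) := by
      funext z; rfl
    exact hco ▸ (σe.prodCongr σe).measurableEmbedding
  have hemb2 : MeasurableEmbedding (Prod.map (reflH e t)
      (id : EuclideanSpace ℝ (Fin N) → EuclideanSpace ℝ (Fin N))) := by
    have hco : ⇑(σe.prodCongr (MeasurableEquiv.refl (EuclideanSpace ℝ (Fin N))))
        = Prod.map (reflH e t) id := by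
      funext z; rfl
    exact hco ▸ (σe.prodCongr (MeasurableEquiv.refl _)).measurableEmbedding
  have hemb3 : MeasurableEmbedding (Prod.map
      (id : EuclideanSpace ℝ (Fin N) → EuclideanSpace ℝ (Fin N)) (reflH e t)) := by
    have hco : ⇑((MeasurableEquiv.refl (EuclideanSpace ℝ (Fin N))).prodCongr σe)
        = Prod.map id (reflH e t) := by
      funext z; rfl
    exact hco ▸ ((MeasurableEquiv.refl _).prodCongr σe).measurableEmbedding
  -- integrability of all composed functions
  have hint1 : Integrable (fun z => F (Prod.map (reflH e t) (reflH e t) z)) volume :=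
    (hmp1.integrable_comp_emb hemb1).mpr hQint
  have hint2 : Integrable (fun z => F (Prod.map (reflH e t) id z)) volume :=
    (hmp2.integrable_comp_emb hemb2).mpr hQint
  have hint3 : Integrable (fun z => F (Prod.map id (reflH e t) z)) volume :=
    (hmp3.integrable_comp_emb hemb3).mpr hQint
  have hHint1 : Integrable (fun z => FH (Prod.map (reflH e t) (reflH e t) z)) volume :=
    (hmp1.integrable_comp_emb hemb1).mpr hQHint
  have hHint2 : Integrable (fun z => FH (Prod.map (reflH e t) id z)) volume :=
    (hmp2.integrable_comp_emb hemb2).mpr hQHint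
  have hHint3 : Integrable (fun z => FH (Prod.map id (reflH e t) z)) volume :=
    (hmp3.integrable_comp_emb hemb3).mpr hQHint
  have h1 : ∫ z, F (Prod.map (reflH e t) (reflH e t) z) = ∫ z, F z :=
    hmp1.integral_comp hemb1 F
  have h2 : ∫ z, F (Prod.map (reflH e t) id z) = ∫ z, F z := hmp2.integral_comp hemb2 F
  have h3 : ∫ z, F (Prod.map id (reflH e t) z) = ∫ z, F z := hmp3.integral_comp hemb3 F
  have hH1 : ∫ z, FH (Prod.map (reflH e t) (reflH e t) z) = ∫ z, FH z :=
    hmp1.integral_comp hemb1 FH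
  have hH2 : ∫ z, FH (Prod.map (reflH e t) id z) = ∫ z, FH z := hmp2.integral_comp hemb2 FH
  have hH3 : ∫ z, FH (Prod.map id (reflH e t) z) = ∫ z, FH z := hmp3.integral_comp hemb3 FH
  -- the main integral inequality on the product space
  have hi12 : Integrable (fun z => F z + F (Prod.map (reflH e t) (reflH e t) z)) volume :=
    hQint.add hint1
  have hi123 : Integrable (fun z => F z + F (Prod.map (reflH e t) (reflH e t) z) +
      F (Prod.map (reflH e t) id z)) volume := hi12.add hint2
  have hi1234 : Integrable (fun z => F z + F (Prod.map (reflH e t) (reflH e t) z) +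
      F (Prod.map (reflH e t) id z) + F (Prod.map id (reflH e t) z)) volume := hi123.add hint3
  have hHi12 : Integrable (fun z => FH z + FH (Prod.map (reflH e t) (reflH e t) z)) volume :=
    hQHint.add hHint1
  have hHi123 : Integrable (fun z => FH z + FH (Prod.map (reflH e t) (reflH e t) z) +
      FH (Prod.map (reflH e t) id z)) volume := hHi12.add hHint2
  have hHi1234 : Integrable (fun z => FH z + FH (Prod.map (reflH e t) (reflH e t) z) +
      FH (Prod.map (reflH e t) id z) + FH (Prod.map id (reflH e t) z)) volume :=
    hHi123.add hHint3
  have hmain : ∫ z, F z ≤ ∫ z, FH z := by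
    have hsum : ∫ z, (F z + F (Prod.map (reflH e t) (reflH e t) z) +
        F (Prod.map (reflH e t) id z) + F (Prod.map id (reflH e t) z)) =
        (4 : ℝ) * ∫ z, F z := by
      have e1 : ∫ z, (F z + F (Prod.map (reflH e t) (reflH e t) z) +
          F (Prod.map (reflH e t) id z) + F (Prod.map id (reflH e t) z)) =
          (∫ z, (F z + F (Prod.map (reflH e t) (reflH e t) z) +
            F (Prod.map (reflH e t) id z))) + ∫ z, F (Prod.map id (reflH e t) z) :=
        integral_add hi123 hint3
      have e2 : ∫ z, (F z + F (Prod.map (reflH e t) (reflH e t) z) +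
          F (Prod.map (reflH e t) id z)) =
          (∫ z, (F z + F (Prod.map (reflH e t) (reflH e t) z))) +
            ∫ z, F (Prod.map (reflH e t) id z) := integral_add hi12 hint2
      have e3 : ∫ z, (F z + F (Prod.map (reflH e t) (reflH e t) z)) =
          (∫ z, F z) + ∫ z, F (Prod.map (reflH e t) (reflH e t) z) :=
        integral_add hQint hint1
      rw [e1, e2, e3, h1, h2, h3]; ring
    have hHsum : ∫ z, (FH z + FH (Prod.map (reflH e t) (reflH e t) z) +
        FH (Prod.map (reflH e t) id z) + FH (Prod.map id (reflH e t) z)) =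
        (4 : ℝ) * ∫ z, FH z := by
      have e1 : ∫ z, (FH z + FH (Prod.map (reflH e t) (reflH e t) z) +
          FH (Prod.map (reflH e t) id z) + FH (Prod.map id (reflH e t) z)) =
          (∫ z, (FH z + FH (Prod.map (reflH e t) (reflH e t) z) +
            FH (Prod.map (reflH e t) id z))) + ∫ z, FH (Prod.map id (reflH e t) z) :=
        integral_add hHi123 hHint3
      have e2 : ∫ z, (FH z + FH (Prod.map (reflH e t) (reflH e t) z) +
          FH (Prod.map (reflH e t) id z)) =
          (∫ z, (FH z + FH (Prod.map (reflH e t) (reflH e t) z))) +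
            ∫ z, FH (Prod.map (reflH e t) id z) := integral_add hHi12 hHint2
      have e3 : ∫ z, (FH z + FH (Prod.map (reflH e t) (reflH e t) z)) =
          (∫ z, FH z) + ∫ z, FH (Prod.map (reflH e t) (reflH e t) z) :=
        integral_add hQHint hHint1
      rw [e1, e2, e3, hH1, hH2, hH3]; ring
    have hle : ∫ z, (F z + F (Prod.map (reflH e t) (reflH e t) z) +
        F (Prod.map (reflH e t) id z) + F (Prod.map id (reflH e t) z)) ≤
        ∫ z, (FH z + FH (Prod.map (reflH e t) (reflH e t) z) +
        FH (Prod.map (reflH e t) id z) + FH (Prod.map id (reflH e t) z)) := by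
      apply integral_mono hi1234 hHi1234
      intro z
      have h := hpoint z
      simpa [Prod.map] using h
    rw [hsum, hHsum] at hle
    linarith
  -- conclude via Fubini
  have hQint' : Integrable F
      ((volume : Measure (EuclideanSpace ℝ (Fin N))).prod volume) := by
    rwa [← Measure.volume_eq_prod]
  have hQHint' : Integrable FH
      ((volume : Measure (EuclideanSpace ℝ (Fin N))).prod volume) := by
    rwa [← Measure.volume_eq_prod]
  calc (∫ x, ∫ y, G (fun i => U i x) * V ‖x - y‖ * G (fun i => U i y))
      = ∫ z : EuclideanSpace ℝ (Fin N) × EuclideanSpace ℝ (Fin N), F z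
          ∂((volume : Measure (EuclideanSpace ℝ (Fin N))).prod volume) :=
        integral_integral (f := fun x y =>
          G (fun i => U i x) * V ‖x - y‖ * G (fun i => U i y)) hQint'
    _ ≤ ∫ z : EuclideanSpace ℝ (Fin N) × EuclideanSpace ℝ (Fin N), FH z
          ∂((volume : Measure (EuclideanSpace ℝ (Fin N))).prod volume) := by
        rw [← Measure.volume_eq_prod]; exact hmain
    _ = _ := (integral_integral (f := fun x y =>
          G (fun i => polarize e t (U i) x) * V ‖x - y‖ *
            G (fun i => polarize e t (U i) y)) hQHint').symm
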